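/- For a nonzero subobject X' of X, the following are equivalent: (a) X' is semistable and for every subobject X'' of X properly containing X' one has μ(X'') < μ(X'); (b) X' is of maximal slope and satisfies the same strict-containment condition; (c) X' is the final subobject of X of maximal slope. -/

import Mathlib

open CategoryTheory Limits

universe v u v' u'

variable (C : Type u) [Category.{v} C] [Preadditive C] [HasZeroObject C]
  [HasBinaryBiproducts C]
variable (D : Type u') [Category.{v'} D] [Abelian D]
variable (F : C ⥤ D) [F.Additive] [F.Faithful]
variable (V : Type*) [AddCommGroup V] [LinearOrder V] [IsOrderedAddMonoid V]

/-- The data and axioms of abstract Harder–Narasimhan theory: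
an exact structure on `C` (given by its class of short strict exact sequences),
an exact faithful functor `F : C ⥤ D` inducing bijections between strict
subobjects and subobjects of the image, a rank function on `D` and a degree
function on `C`. -/
structure HNTheory where
  /-- `SSE f g` means `0 ⟶ A ⟶ B ⟶ Z ⟶ 0` is a short strict exact sequence. -/
  SSE : ∀ ⦃A B Z : C⦄, (A ⟶ B) → (B ⟶ Z) → Prop
  sse_comp_zero : ∀ ⦃A B Z : C⦄ (f : A ⟶ B) (g : B ⟶ Z), SSE f g → f ≫ g = 0
  sse_mono : ∀ ⦃A B Z : C⦄ (f : A ⟶ B) (g : B ⟶ Z), SSE f g → Mono f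
  sse_epi : ∀ ⦃A B Z : C⦄ (f : A ⟶ B) (g : B ⟶ Z), SSE f g → Epi g
  sse_isKernel : ∀ ⦃A B Z : C⦄ (f : A ⟶ B) (g : B ⟶ Z) (hfg : SSE f g),
    Nonempty (IsLimit (KernelFork.ofι f (sse_comp_zero f g hfg)))
  sse_isCokernel : ∀ ⦃A B Z : C⦄ (f : A ⟶ B) (g : B ⟶ Z) (hfg : SSE f g),
    Nonempty (IsColimit (CokernelCofork.ofπ g (sse_comp_zero f g hfg)))
  /-- `F` is exact. -/
  F_exact : ∀ ⦃A B Z : C⦄ (f : A ⟶ B) (g : B ⟶ Z) (hfg : SSE f g),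
    (ShortComplex.mk (F.map f) (F.map g)
      (by rw [← F.map_comp, sse_comp_zero f g hfg, F.map_zero])).ShortExact
  /-- `F` induces a bijection between strict subobjects of `X` and subobjects
  of `F(X)`. -/
  strict_sub_bij : ∀ X : C,
    Function.Bijective
      (fun S : {S : Subobject X // ∃ (Z : C) (g : X ⟶ Z), SSE S.arrow g} =>
        imageSubobject (F.map S.1.arrow))
  rk : D → ℕ
  rk_iso : ∀ ⦃X Y : D⦄, (X ≅ Y) → rk X = rk Y
  rk_eq_zero_iff : ∀ X : D, rk X = 0 ↔ IsZero X
  rk_additive : ∀ (S : ShortComplex D), S.ShortExact → rk S.X₂ = rk S.X₁ + rk S.X₃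
  deg : C → V
  deg_iso : ∀ ⦃X Y : C⦄, (X ≅ Y) → deg X = deg Y
  deg_additive : ∀ ⦃A B Z : C⦄ (f : A ⟶ B) (g : B ⟶ Z), SSE f g → deg B = deg A + deg Z
  deg_le_of_FIso : ∀ ⦃X Y : C⦄ (f : X ⟶ Y), IsIso (F.map f) → deg X ≤ deg Y
  deg_eq_iff_of_FIso : ∀ ⦃X Y : C⦄ (f : X ⟶ Y), IsIso (F.map f) → (deg X = deg Y ↔ IsIso f)

namespace HNTheory

variable {C D F V}

/-- The subobject `F(X') ⊆ F(X)` associated to a subobject `X' ⊆ X`. -/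
noncomputable def FSub (_h : HNTheory C D F V) {X : C} (S : Subobject X) :
    Subobject (F.obj X) :=
  imageSubobject (F.map S.arrow)

variable (h : HNTheory C D F V)

/-- The rank of an object of `C` is the rank of its image in `D`. -/
def rkC (X : C) : ℕ := h.rk (F.obj X)

/-- A subobject is strict if it is an admissible (strict) monomorphism,
i.e. fits in a short strict exact sequence. -/
def StrictSub {X : C} (S : Subobject X) : Prop :=
  ∃ (Z : C) (g : X ⟶ Z), h.SSE S.arrow g

/-- `μ(X) ≤ μ(Y)`, in cross-multiplied form `rk(Y) • deg(X) ≤ rk(X) • deg(Y)`. -/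
def muLE (X Y : C) : Prop := h.rkC Y • h.deg X ≤ h.rkC X • h.deg Y

/-- `μ(X) < μ(Y)`, in cross-multiplied form. -/
def muLT (X Y : C) : Prop := h.rkC Y • h.deg X < h.rkC X • h.deg Y

/-- `μ(X) = μ(Y)`, in cross-multiplied form. -/
def muEQ (X Y : C) : Prop := h.rkC Y • h.deg X = h.rkC X • h.deg Y

/-- A nonzero object is semistable if every nonzero proper subobject has
slope at most that of the ambient object. -/
def Semistable (X : C) : Prop :=
  ¬ IsZero X ∧ ∀ S : Subobject X, ¬ IsZero ((S : C)) → S ≠ ⊤ → h.muLE (S : C) X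

/-- A subobject of maximal slope. -/
def MaxSlopeSub {X : C} (S : Subobject X) : Prop :=
  ¬ IsZero ((S : C)) ∧ ∀ T : Subobject X, ¬ IsZero ((T : C)) → h.muLE (T : C) (S : C)

/-- `G` is (a model of) the `i`-th graded piece `c i.succ / c i.castSucc` of a
filtration `c` by strict subobjects. -/
def GrAt {X : C} {N : ℕ} (c : Fin (N + 1) → Subobject X) (i : Fin N) (G : C) : Prop :=
  ∃ (hle : c i.castSucc ≤ c i.succ) (p : ((c i.succ : Subobject X) : C) ⟶ G),
    h.SSE (Subobject.ofLE (c i.castSucc) (c i.succ) hle) p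

/-- `c` is a Harder–Narasimhan filtration. -/
def IsHNFilt {X : C} {N : ℕ} (c : Fin (N + 1) → Subobject X) : Prop :=
  StrictMono c ∧ c 0 = ⊥ ∧ c (Fin.last N) = ⊤ ∧ (∀ i, h.StrictSub (c i)) ∧
  (∀ (i : Fin N) (G : C), h.GrAt c i G → h.Semistable G) ∧
  (∀ (i j : Fin N), i < j → ∀ (Gi Gj : C),
    h.GrAt c i Gi → h.GrAt c j Gj → h.muLT Gj Gi)

end HNTheory

namespace HNTheory

section Aux

set_option linter.unusedSectionVars false

variable {C D F V}

section NoH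

variable {A B : C}

lemma aux_map_zero_reflect {f : A ⟶ B} (hf : F.map f = 0) : f = 0 :=
  (Functor.map_eq_zero_iff F).mp hf

lemma aux_isZero_reflect (hA : IsZero (F.obj A)) : IsZero A := by
  rw [IsZero.iff_id_eq_zero] at hA ⊢
  exact (Functor.map_eq_zero_iff F).mp (by rw [F.map_id]; exact hA)

lemma aux_isZero_map (hA : IsZero A) : IsZero (F.obj A) := by
  rw [IsZero.iff_id_eq_zero] at hA ⊢
  rw [← F.map_id, hA, F.map_zero]

lemma aux_isZero_of_arrow_zero {Y : C} {B : Subobject Y} (hz : B.arrow = 0) :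
    IsZero ((B : C)) := by
  rw [IsZero.iff_id_eq_zero]
  exact (cancel_mono B.arrow).mp (by simp [hz])

lemma aux_isZero_of_le {Y : C} {A B : Subobject Y} (hle : A ≤ B) (hz : IsZero ((B : C))) :
    IsZero ((A : C)) := by
  apply aux_isZero_of_arrow_zero (B := A)
  rw [← Subobject.ofLE_arrow hle, hz.eq_of_src B.arrow 0, comp_zero]

end NoH

/-- A helper in the abelian category `D`. -/
lemma aux_image_arrow_comp_zero {A X' W : D} {f : A ⟶ X'} {k : X' ⟶ W} (hfk : f ≫ k = 0) :
    (imageSubobject f).arrow ≫ k = 0 := by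
  rw [← cancel_epi (factorThruImageSubobject f), comp_zero, ← Category.assoc,
    imageSubobject_arrow_comp, hfk]

/-- If `p ≫ n` has the same image as the mono `n`, then `p` is an epimorphism. -/
lemma aux_epi_of_image_eq {A Y X' : D} (p : A ⟶ Y) (n : Y ⟶ X') [Mono n]
    (him : imageSubobject (p ≫ n) = imageSubobject n) : Epi p := by
  have him' : imageSubobject (p ≫ n) = Subobject.mk n := him.trans (imageSubobject_mono n)
  let θ : ((imageSubobject (p ≫ n) : D)) ⟶ Y :=
    (Subobject.isoOfEq _ _ him').hom ≫ (Subobject.underlyingIso n).hom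
  have hθn : θ ≫ n = (imageSubobject (p ≫ n)).arrow := by
    simp only [θ, Category.assoc, Subobject.underlyingIso_hom_comp_eq_mk]
    exact Subobject.ofLE_arrow _
  have hfac : factorThruImageSubobject (p ≫ n) ≫ θ = p := by
    rw [← cancel_mono n, Category.assoc, hθn, imageSubobject_arrow_comp]
  rw [← hfac]
  have : IsIso θ := inferInstance
  exact epi_comp _ _

variable (h : HNTheory C D F V)

lemma aux_rkC_pos {A : C} (hA : ¬ IsZero A) : 0 < h.rkC A :=
  Nat.pos_of_ne_zero (fun e => hA (aux_isZero_reflect ((h.rk_eq_zero_iff _).mp e)))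

lemma aux_rkC_iso {A B : C} (e : A ≅ B) : h.rkC A = h.rkC B :=
  h.rk_iso (F.mapIso e)

lemma aux_rkC_additive {A B Z : C} {f : A ⟶ B} {g : B ⟶ Z} (hsse : h.SSE f g) :
    h.rkC B = h.rkC A + h.rkC Z :=
  h.rk_additive _ (h.F_exact f g hsse)

lemma aux_deg_of_isZero {A : C} (hA : IsZero A) : h.deg A = 0 := by
  obtain ⟨⟨B, hB⟩, -⟩ := (h.strict_sub_bij A).2 ⊥
  obtain ⟨Z, g, hsse⟩ := hB
  have hBz : IsZero ((B : C)) := aux_isZero_of_arrow_zero (hA.eq_of_tgt B.arrow 0)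
  have hZz : IsZero Z := by
    apply aux_isZero_reflect (F := F)
    have hepi : Epi (F.map g) := (h.F_exact _ _ hsse).epi_g
    have hFg : F.map g = 0 := (aux_isZero_map (F := F) hA).eq_of_src _ _
    rw [IsZero.iff_id_eq_zero]
    exact (cancel_epi (F.map g)).mp (by rw [hFg]; simp)
  have hadd := h.deg_additive _ _ hsse
  rw [h.deg_iso (hBz.iso hA), h.deg_iso (hZz.iso hA)] at hadd
  exact (add_left_cancel (a := h.deg A) (by rw [add_zero, ← hadd])).symm

lemma aux_factor_of_comp_zero {Y : C} {B : Subobject Y} {Z : C} {g : Y ⟶ Z}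
    (hsse : h.SSE B.arrow g) {A₀ : C} (f : A₀ ⟶ Y) (hf : F.map f ≫ F.map g = 0) :
    ∃ u : A₀ ⟶ (B : C), u ≫ B.arrow = f := by
  have hfg : f ≫ g = 0 := aux_map_zero_reflect (F := F) (by rw [F.map_comp, hf])
  obtain ⟨l, hl⟩ := KernelFork.IsLimit.lift' (h.sse_isKernel _ _ hsse).some f hfg
  exact ⟨l, hl⟩

lemma aux_muLE_trans {A B E : C} (h1 : h.muLE A B) (h2 : h.muLE B E) (hB : 0 < h.rkC B) :
    h.muLE A E := by
  have key : h.rkC B • (h.rkC E • h.deg A) ≤ h.rkC B • (h.rkC A • h.deg E) := by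
    calc h.rkC B • (h.rkC E • h.deg A) = h.rkC E • (h.rkC B • h.deg A) := smul_comm _ _ _
    _ ≤ h.rkC E • (h.rkC A • h.deg B) := nsmul_le_nsmul_right h1 _
    _ = h.rkC A • (h.rkC E • h.deg B) := smul_comm _ _ _
    _ ≤ h.rkC A • (h.rkC B • h.deg E) := nsmul_le_nsmul_right h2 _
    _ = h.rkC B • (h.rkC A • h.deg E) := smul_comm _ _ _
  exact le_of_nsmul_le_nsmul_right hB.ne' key

lemma aux_muLE_congr {A A' B B' : C} (eA : A ≅ A') (eB : B ≅ B') (hab : h.muLE A B) :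
    h.muLE A' B' := by
  have : h.muLE A B ↔ h.muLE A' B' := by
    unfold muLE
    rw [h.deg_iso eA, h.deg_iso eB, aux_rkC_iso h eA, aux_rkC_iso h eB]
  exact this.mp hab

/-- Every subobject is contained in a strict subobject with the same image, the same
rank and at least the same degree. -/
lemma aux_exists_strict_of_mono {Y A₀ : C} (f : A₀ ⟶ Y) [Mono f] :
    ∃ (B : Subobject Y) (u : A₀ ⟶ (B : C)),
      h.StrictSub B ∧ imageSubobject (F.map B.arrow) = imageSubobject (F.map f) ∧
      u ≫ B.arrow = f ∧ IsIso (F.map u) := by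
  obtain ⟨⟨B, hB⟩, hφ0⟩ := (h.strict_sub_bij Y).2 (imageSubobject (F.map f))
  have hφ : imageSubobject (F.map B.arrow) = imageSubobject (F.map f) := hφ0
  obtain ⟨Z, g, hsse⟩ := hB
  have hfz : F.map f ≫ F.map g = 0 := by
    have h0 : (imageSubobject (F.map f)).arrow ≫ F.map g = 0 := by
      rw [← hφ]
      exact aux_image_arrow_comp_zero
        (by rw [← F.map_comp, h.sse_comp_zero _ _ hsse, F.map_zero])
    rw [← imageSubobject_arrow_comp (F.map f), Category.assoc, h0, comp_zero]
  obtain ⟨u, hu⟩ := aux_factor_of_comp_zero h hsse f hfz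
  have hmB : Mono (F.map B.arrow) := (h.F_exact _ _ hsse).mono_f
  have hepi : Epi (F.map u) := by
    apply aux_epi_of_image_eq (F.map u) (F.map B.arrow)
    rw [← F.map_comp, hu, hφ]
  have hmono : Mono (F.map u) := by
    obtain ⟨⟨Bk, hBk⟩, hk0⟩ := (h.strict_sub_bij A₀).2 (kernelSubobject (F.map u))
    have hk : imageSubobject (F.map Bk.arrow) = kernelSubobject (F.map u) := hk0
    have h1 : F.map Bk.arrow ≫ F.map u = 0 := by
      have h1' : (imageSubobject (F.map Bk.arrow)).arrow ≫ F.map u = 0 := by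
        rw [hk]; exact kernelSubobject_arrow_comp _
      rw [← imageSubobject_arrow_comp (F.map Bk.arrow), Category.assoc, h1', comp_zero]
    have h2 : Bk.arrow ≫ u = 0 := aux_map_zero_reflect (F := F) (by rw [F.map_comp, h1])
    have h3 : Bk.arrow = 0 := zero_of_comp_mono f
      (by rw [← hu, ← Category.assoc, h2, zero_comp])
    have h5 : F.map Bk.arrow = 0 := by
      exact (aux_isZero_map (F := F) (aux_isZero_of_arrow_zero h3)).eq_of_src _ _
    have h6 : kernelSubobject (F.map u) = ⊥ := by rw [← hk, h5, imageSubobject_zero]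
    refine Preadditive.mono_of_cancel_zero _ (fun x hx => ?_)
    have hfac := factorThruKernelSubobject_comp_arrow (F.map u) x hx
    rw [← hfac]
    have : (kernelSubobject (F.map u)).arrow = 0 := by rw [h6, Subobject.bot_arrow]
    rw [this, comp_zero]
  exact ⟨B, u, ⟨Z, g, hsse⟩, hφ, hu, isIso_of_mono_of_epi _⟩

lemma aux_exists_strict_ge {Y : C} (A : Subobject Y) :
    ∃ B : Subobject Y, h.StrictSub B ∧ A ≤ B ∧ h.rkC ((A : C)) = h.rkC ((B : C)) ∧
      h.deg ((A : C)) ≤ h.deg ((B : C)) ∧ (h.deg ((A : C)) = h.deg ((B : C)) → A = B) := by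
  obtain ⟨B, u, hstrict, hφ, hu, hIso⟩ := aux_exists_strict_of_mono h A.arrow
  refine ⟨B, hstrict, Subobject.le_of_comm u hu, h.rk_iso (asIso (F.map u)),
    h.deg_le_of_FIso u hIso, fun hdeg => ?_⟩
  have hiso : IsIso u := (h.deg_eq_iff_of_FIso u hIso).mp hdeg
  refine le_antisymm (Subobject.le_of_comm u hu) (Subobject.le_of_comm (inv u) ?_)
  rw [IsIso.inv_comp_eq, hu]

/-- The core construction: if every nonzero subobject of `S` has slope at most `μ(S)`,
`T` is a nonzero strict subobject not contained in `S` with `μ(S) ≤ μ(T)`, then there is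
a strict subobject `U` strictly containing `S` with `μ(S) ≤ μ(U)`. -/
lemma aux_core {X : C} (S T : Subobject X)
    (hsS : h.StrictSub S) (hsT : h.StrictSub T)
    (hSnz : ¬ IsZero ((S : C))) (hTnz : ¬ IsZero ((T : C)))
    (hypSub : ∀ T' : Subobject X, ¬ IsZero ((T' : C)) → T' ≤ S → h.muLE ((T' : C)) ((S : C)))
    (hTS : ¬ T ≤ S) (hST : h.muLE ((S : C)) ((T : C))) :
    ∃ U : Subobject X, h.StrictSub U ∧ S < U ∧ h.muLE ((S : C)) ((U : C)) := by
  obtain ⟨Z_S, g_S, hgS⟩ := hsS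
  -- the strict subobject `U` generated by `S` and `T`
  set dC : ((S : C) ⊞ (T : C)) ⟶ X := biprod.desc S.arrow T.arrow with hdC
  obtain ⟨⟨U, hU⟩, hφU0⟩ := (h.strict_sub_bij X).2 (imageSubobject (F.map dC))
  have hφU : imageSubobject (F.map U.arrow) = imageSubobject (F.map dC) := hφU0
  obtain ⟨Z_U, g_U, hgU⟩ := hU
  have hWz : (imageSubobject (F.map dC)).arrow ≫ F.map g_U = 0 := by
    rw [← hφU]
    exact aux_image_arrow_comp_zero
      (by rw [← F.map_comp, h.sse_comp_zero _ _ hgU, F.map_zero])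
  have hdCz : F.map dC ≫ F.map g_U = 0 := by
    rw [← imageSubobject_arrow_comp (F.map dC), Category.assoc, hWz, comp_zero]
  have hSU : S ≤ U := by
    obtain ⟨u, hu⟩ := aux_factor_of_comp_zero h hgU S.arrow (by
      have hS' : S.arrow = biprod.inl ≫ dC := by simp [hdC]
      rw [hS', F.map_comp, Category.assoc, hdCz, comp_zero])
    exact Subobject.le_of_comm u hu
  have hTU : T ≤ U := by
    obtain ⟨u, hu⟩ := aux_factor_of_comp_zero h hgU T.arrow (by
      have hT' : T.arrow = biprod.inr ≫ dC := by simp [hdC]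
      rw [hT', F.map_comp, Category.assoc, hdCz, comp_zero])
    exact Subobject.le_of_comm u hu
  have hSltU : S < U := lt_of_le_of_ne hSU (fun e => hTS (by rw [e]; exact hTU))
  -- the strict subobject `s'` of `U` corresponding to `S`
  obtain ⟨s', us, hs'strict, hφs', hus, hIsoUs⟩ :=
    aux_exists_strict_of_mono h (Subobject.ofLE S U hSU)
  obtain ⟨Q, q, hq⟩ := hs'strict
  have hOfLESq : Subobject.ofLE S U hSU ≫ q = 0 := by
    rw [← hus, Category.assoc, h.sse_comp_zero _ _ hq, comp_zero]
  have hdegU : h.deg ((U : C)) = h.deg ((s' : C)) + h.deg Q := h.deg_additive _ _ hq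
  have hrkU : h.rkC ((U : C)) = h.rkC ((s' : C)) + h.rkC Q := aux_rkC_additive h hq
  have hdegSs' : h.deg ((S : C)) ≤ h.deg ((s' : C)) := h.deg_le_of_FIso us hIsoUs
  have hrkSs' : h.rkC ((S : C)) = h.rkC ((s' : C)) := h.rk_iso (asIso (F.map us))
  -- the strict subobject `i'` of `T` corresponding to `S ∩ T`
  set m : ((T : C)) ⟶ Q := Subobject.ofLE T U hTU ≫ q with hm
  obtain ⟨⟨i', hi'⟩, hφi'0⟩ := (h.strict_sub_bij ((T : C))).2 (kernelSubobject (F.map m))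
  have hφi' : imageSubobject (F.map i'.arrow) = kernelSubobject (F.map m) := hφi'0
  obtain ⟨Q', π', hπ'⟩ := hi'
  have hdegT : h.deg ((T : C)) = h.deg ((i' : C)) + h.deg Q' := h.deg_additive _ _ hπ'
  have hrkT : h.rkC ((T : C)) = h.rkC ((i' : C)) + h.rkC Q' := aux_rkC_additive h hπ'
  -- the induced morphism `r : Q' ⟶ Q` and the fact that `F.map r` is an isomorphism
  have hFi'm : F.map i'.arrow ≫ F.map m = 0 := by
    have h0 : (imageSubobject (F.map i'.arrow)).arrow ≫ F.map m = 0 := by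
      rw [hφi']; exact kernelSubobject_arrow_comp _
    rw [← imageSubobject_arrow_comp (F.map i'.arrow), Category.assoc, h0, comp_zero]
  have hi'm : i'.arrow ≫ m = 0 := aux_map_zero_reflect (F := F) (by rw [F.map_comp, hFi'm])
  obtain ⟨r, hr0⟩ := CokernelCofork.IsColimit.desc' (h.sse_isCokernel _ _ hπ').some m hi'm
  have hr : π' ≫ r = m := hr0
  have hFrF : F.map π' ≫ F.map r = F.map m := by rw [← F.map_comp, hr]
  have hmU : Mono (F.map U.arrow) := (h.F_exact _ _ hgU).mono_f
  have hqepi : Epi (F.map q) := (h.F_exact _ _ hq).epi_g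
  have hπepi : Epi (F.map π') := (h.F_exact _ _ hπ').epi_g
  have hFmepi : Epi (F.map m) := by
    set dC' : ((S : C) ⊞ (T : C)) ⟶ ((U : C)) :=
      biprod.desc (Subobject.ofLE S U hSU) (Subobject.ofLE T U hTU) with hdC'
    have hcomm : dC' ≫ U.arrow = dC := by
      apply biprod.hom_ext' <;> simp [hdC', hdC]
    have hδepi : Epi (F.map dC') := by
      apply aux_epi_of_image_eq (F.map dC') (F.map U.arrow)
      rw [← F.map_comp, hcomm, hφU]
    have hsnd : dC' ≫ q = biprod.snd ≫ m := by
      apply biprod.hom_ext' <;> simp [hdC', hm, hOfLESq]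
    refine Preadditive.epi_of_cancel_zero _ (fun x hx => ?_)
    have h1 : F.map dC' ≫ F.map q ≫ x = 0 := by
      rw [← Category.assoc, ← F.map_comp, hsnd, F.map_comp, Category.assoc, hx, comp_zero]
    have h2 : F.map q ≫ x = 0 := zero_of_epi_comp (F.map dC') h1
    exact zero_of_epi_comp (F.map q) h2
  have hFrepi : Epi (F.map r) := by
    have : Epi (F.map π' ≫ F.map r) := by rw [hFrF]; exact hFmepi
    exact epi_of_epi (F.map π') (F.map r)
  have hKπ : (kernelSubobject (F.map m)).arrow ≫ F.map π' = 0 := by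
    rw [← hφi']
    exact aux_image_arrow_comp_zero
      (by rw [← F.map_comp, h.sse_comp_zero _ _ hπ', F.map_zero])
  have hFrmono : Mono (F.map r) := by
    refine Preadditive.mono_of_cancel_zero _ (fun x hx => ?_)
    have hc : pullback.snd x (F.map π') ≫ F.map m = 0 := by
      rw [← hFrF, ← Category.assoc, ← pullback.condition, Category.assoc, hx, comp_zero]
    have hfac := factorThruKernelSubobject_comp_arrow (F.map m) _ hc
    have h1 : pullback.fst x (F.map π') ≫ x = 0 := by
      rw [pullback.condition, ← hfac, Category.assoc, hKπ, comp_zero]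
    exact zero_of_epi_comp (pullback.fst x (F.map π')) h1
  have hFrIso : IsIso (F.map r) := isIso_of_mono_of_epi _
  have hdegQ : h.deg Q' ≤ h.deg Q := h.deg_le_of_FIso r hFrIso
  have hrkQ : h.rkC Q' = h.rkC Q := h.rk_iso (asIso (F.map r))
  -- `i'`, viewed inside `X`, is contained in `S`
  have hse := h.F_exact _ _ hq
  have hmsf : Mono (F.map s'.arrow) := hse.mono_f
  have hK1 : ((kernelSubobject (F.map m)).arrow ≫ F.map (Subobject.ofLE T U hTU)) ≫
      F.map q = 0 := by
    rw [Category.assoc, ← F.map_comp, ← hm]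
    exact kernelSubobject_arrow_comp _
  set z := hse.exact.lift _ hK1 with hzdef
  have hz : z ≫ F.map s'.arrow =
      (kernelSubobject (F.map m)).arrow ≫ F.map (Subobject.ofLE T U hTU) :=
    hse.exact.lift_f _ _
  have hs'gs : F.map s'.arrow ≫ F.map U.arrow ≫ F.map g_S = 0 := by
    have h1 : (imageSubobject (F.map (Subobject.ofLE S U hSU))).arrow ≫
        (F.map U.arrow ≫ F.map g_S) = 0 := by
      refine aux_image_arrow_comp_zero ?_
      rw [← Category.assoc, ← F.map_comp, Subobject.ofLE_arrow, ← F.map_comp,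
        h.sse_comp_zero _ _ hgS, F.map_zero]
    have h2 : (imageSubobject (F.map s'.arrow)).arrow ≫ (F.map U.arrow ≫ F.map g_S) = 0 := by
      rw [hφs']; exact h1
    rw [← imageSubobject_arrow_comp (F.map s'.arrow), Category.assoc, h2, comp_zero]
  have hKTS : F.map (i'.arrow ≫ T.arrow) ≫ F.map g_S = 0 := by
    have hKz : (kernelSubobject (F.map m)).arrow ≫ (F.map T.arrow ≫ F.map g_S) = 0 := by
      have hT : F.map T.arrow = F.map (Subobject.ofLE T U hTU) ≫ F.map U.arrow := by
        rw [← F.map_comp, Subobject.ofLE_arrow]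
      rw [hT, ← Category.assoc, ← Category.assoc, ← hz]
      rw [Category.assoc, Category.assoc, hs'gs, comp_zero]
    have h3 : (imageSubobject (F.map i'.arrow)).arrow ≫ (F.map T.arrow ≫ F.map g_S) = 0 := by
      rw [hφi']; exact hKz
    rw [F.map_comp, Category.assoc]
    rw [← imageSubobject_arrow_comp (F.map i'.arrow), Category.assoc, h3, comp_zero]
  obtain ⟨v, hv⟩ := aux_factor_of_comp_zero h hgS (i'.arrow ≫ T.arrow) hKTS
  have semRes : h.rkC ((S : C)) • h.deg ((i' : C)) ≤ h.rkC ((i' : C)) • h.deg ((S : C)) := by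
    by_cases hz0 : IsZero ((i' : C))
    · have hrk0 : h.rkC ((i' : C)) = 0 := (h.rk_eq_zero_iff _).mpr (aux_isZero_map (F := F) hz0)
      rw [aux_deg_of_isZero h hz0, hrk0]
      simp
    · set J : Subobject X := Subobject.mk (i'.arrow ≫ T.arrow) with hJ
      have hJiso : ((J : C)) ≅ ((i' : C)) := Subobject.underlyingIso _
      have hJnz : ¬ IsZero ((J : C)) := fun hzz => hz0 (hzz.of_iso hJiso.symm)
      have hJS : J ≤ S := Subobject.mk_le_of_comm v hv
      have hres := hypSub J hJnz hJS
      have : h.muLE ((i' : C)) ((S : C)) := aux_muLE_congr h hJiso (Iso.refl _) hres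
      exact this
  -- final slope computation
  refine ⟨U, ⟨Z_U, g_U, hgU⟩, hSltU, ?_⟩
  show h.rkC ((U : C)) • h.deg ((S : C)) ≤ h.rkC ((S : C)) • h.deg ((U : C))
  have hQ' : h.rkC Q' • h.deg ((S : C)) ≤ h.rkC ((S : C)) • h.deg Q' := by
    have hst : h.rkC ((T : C)) • h.deg ((S : C)) ≤ h.rkC ((S : C)) • h.deg ((T : C)) := hST
    rw [hrkT, hdegT, add_nsmul, smul_add] at hst
    have := hst.trans (add_le_add_left semRes _)
    exact le_of_add_le_add_left this
  calc h.rkC ((U : C)) • h.deg ((S : C))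
      = h.rkC ((S : C)) • h.deg ((S : C)) + h.rkC Q' • h.deg ((S : C)) := by
        rw [hrkU, ← hrkSs', ← hrkQ, add_nsmul]
    _ ≤ h.rkC ((S : C)) • h.deg ((s' : C)) + h.rkC ((S : C)) • h.deg Q' :=
        add_le_add (nsmul_le_nsmul_right hdegSs' _) hQ'
    _ ≤ h.rkC ((S : C)) • h.deg ((s' : C)) + h.rkC ((S : C)) • h.deg Q :=
        add_le_add_right (nsmul_le_nsmul_right hdegQ _) _
    _ = h.rkC ((S : C)) • h.deg ((U : C)) := by rw [hdegU, smul_add]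

/-- Under the strict slope condition, `S` itself is strict. -/
lemma aux_strict_of_cond {X : C} (S : Subobject X) (hSnz : ¬ IsZero ((S : C)))
    (hcond : ∀ T : Subobject X, S < T → h.muLT ((T : C)) ((S : C))) : h.StrictSub S := by
  obtain ⟨B, hB, hle, hrk, hdeg, -⟩ := aux_exists_strict_ge h S
  rcases eq_or_lt_of_le hle with he | hlt
  · rw [he]; exact hB
  · exfalso
    have h1 : h.rkC ((S : C)) • h.deg ((B : C)) < h.rkC ((B : C)) • h.deg ((S : C)) :=
      hcond B hlt
    rw [← hrk] at h1
    exact lt_irrefl _ (lt_of_lt_of_le h1 (nsmul_le_nsmul_right hdeg _))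

lemma aux_semistable_of_max {X : C} (S : Subobject X) (hSnz : ¬ IsZero ((S : C)))
    (hmax : h.MaxSlopeSub S) : h.Semistable ((S : C)) := by
  refine ⟨hSnz, fun T' hT'nz _ => ?_⟩
  set J : Subobject X := Subobject.mk (T'.arrow ≫ S.arrow) with hJ
  have hJiso : ((J : C)) ≅ ((T' : C)) := Subobject.underlyingIso _
  have hJnz : ¬ IsZero ((J : C)) := fun hzz => hT'nz (hzz.of_iso hJiso.symm)
  exact aux_muLE_congr h hJiso (Iso.refl _) (hmax.2 J hJnz)

lemma aux_hypSub_of_semistable {X : C} (S : Subobject X) (hsem : h.Semistable ((S : C))) :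
    ∀ T' : Subobject X, ¬ IsZero ((T' : C)) → T' ≤ S → h.muLE ((T' : C)) ((S : C)) := by
  intro T' hT'nz hle
  have hmono : Mono (Subobject.ofLE T' S hle) := inferInstance
  set j : Subobject ((S : C)) := Subobject.mk (Subobject.ofLE T' S hle) with hj
  have hjiso : ((j : C)) ≅ ((T' : C)) := Subobject.underlyingIso _
  by_cases htop : j = ⊤
  · have hIso : IsIso (Subobject.ofLE T' S hle) := by
      rw [Subobject.isIso_iff_mk_eq_top]; exact htop
    have he : ((T' : C)) ≅ ((S : C)) := asIso (Subobject.ofLE T' S hle)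
    have hrefl : h.muLE ((S : C)) ((S : C)) := le_refl _
    exact aux_muLE_congr h he.symm (Iso.refl _) hrefl
  · have hjnz : ¬ IsZero ((j : C)) := fun hzz => hT'nz (hzz.of_iso hjiso.symm)
    exact aux_muLE_congr h hjiso (Iso.refl _) (hsem.2 j hjnz htop)

/-- (a) implies that `S` is of maximal slope. -/
lemma aux_max_of_semistable_cond {X : C} (S : Subobject X) (hSnz : ¬ IsZero ((S : C)))
    (hsem : h.Semistable ((S : C)))
    (hcond : ∀ T : Subobject X, S < T → h.muLT ((T : C)) ((S : C))) : h.MaxSlopeSub S := by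
  have hstrict := aux_strict_of_cond h S hSnz hcond
  have hypSub := aux_hypSub_of_semistable h S hsem
  refine ⟨hSnz, fun T hTnz => ?_⟩
  obtain ⟨T₁, hT₁s, hle, hrk, hdeg, -⟩ := aux_exists_strict_ge h T
  have hT₁nz : ¬ IsZero ((T₁ : C)) := fun hz => hTnz (aux_isZero_of_le hle hz)
  have hμTT₁ : h.muLE ((T : C)) ((T₁ : C)) := by
    show h.rkC ((T₁ : C)) • h.deg ((T : C)) ≤ h.rkC ((T : C)) • h.deg ((T₁ : C))
    rw [← hrk]
    exact nsmul_le_nsmul_right hdeg _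
  have hμT₁S : h.muLE ((T₁ : C)) ((S : C)) := by
    by_cases hle1 : T₁ ≤ S
    · exact hypSub T₁ hT₁nz hle1
    · by_contra hn
      have hST₁ : h.muLE ((S : C)) ((T₁ : C)) := le_of_lt (not_le.mp hn)
      obtain ⟨U, hUs, hSltU, hμSU⟩ :=
        aux_core h S T₁ hstrict hT₁s hSnz hT₁nz hypSub hle1 hST₁
      exact lt_irrefl _ (lt_of_lt_of_le (hcond U hSltU) hμSU)
  exact aux_muLE_trans h hμTT₁ hμT₁S (aux_rkC_pos h hT₁nz)

/-- Subobjects of maximal slope are strict. -/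
lemma aux_strict_of_max {X : C} (T : Subobject X) (hmax : h.MaxSlopeSub T) :
    h.StrictSub T := by
  obtain ⟨B, hB, hle, hrk, hdeg, heq⟩ := aux_exists_strict_ge h T
  have hBnz : ¬ IsZero ((B : C)) := fun hz => hmax.1 (aux_isZero_of_le hle hz)
  have h1 : h.muLE ((B : C)) ((T : C)) := hmax.2 B hBnz
  have h2 : h.rkC ((T : C)) • h.deg ((B : C)) ≤ h.rkC ((T : C)) • h.deg ((T : C)) := by
    have h1' : h.rkC ((T : C)) • h.deg ((B : C)) ≤ h.rkC ((B : C)) • h.deg ((T : C)) := h1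
    rw [← hrk] at h1'
    exact h1'
  have hdeq : h.deg ((T : C)) = h.deg ((B : C)) :=
    le_antisymm hdeg (le_of_nsmul_le_nsmul_right (aux_rkC_pos h hmax.1).ne' h2)
  rw [heq hdeq]
  exact hB

/-- (b) implies (c): finality. -/
lemma aux_final_of_max_cond {X : C} (S : Subobject X) (hSnz : ¬ IsZero ((S : C)))
    (hmax : h.MaxSlopeSub S)
    (hcond : ∀ T : Subobject X, S < T → h.muLT ((T : C)) ((S : C))) :
    ∀ T : Subobject X, h.MaxSlopeSub T → T ≤ S := by
  intro T hTmax
  have hstrict := aux_strict_of_cond h S hSnz hcond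
  have hTs := aux_strict_of_max h T hTmax
  by_contra hTS
  have hμST : h.muLE ((S : C)) ((T : C)) := hTmax.2 S hSnz
  obtain ⟨U, hUs, hSltU, hμSU⟩ := aux_core h S T hstrict hTs hSnz hTmax.1
    (fun T' hnz _ => hmax.2 T' hnz) hTS hμST
  exact lt_irrefl _ (lt_of_lt_of_le (hcond U hSltU) hμSU)

/-- (c) implies the strict slope condition. -/
lemma aux_cond_of_max_final {X : C} (S : Subobject X) (hSnz : ¬ IsZero ((S : C)))
    (hmax : h.MaxSlopeSub S) (hfin : ∀ T : Subobject X, h.MaxSlopeSub T → T ≤ S) :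
    ∀ T : Subobject X, S < T → h.muLT ((T : C)) ((S : C)) := by
  intro T hSltT
  have hTnz : ¬ IsZero ((T : C)) := fun hz => hSnz (aux_isZero_of_le hSltT.le hz)
  have h1 : h.muLE ((T : C)) ((S : C)) := hmax.2 T hTnz
  by_contra hn
  have h2 : h.rkC ((T : C)) • h.deg ((S : C)) ≤ h.rkC ((S : C)) • h.deg ((T : C)) :=
    not_lt.mp hn
  have hSpos := aux_rkC_pos h hSnz
  have hTmax : h.MaxSlopeSub T := by
    refine ⟨hTnz, fun W hWnz => ?_⟩
    have h3 : h.rkC ((S : C)) • h.deg ((W : C)) ≤ h.rkC ((W : C)) • h.deg ((S : C)) :=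
      hmax.2 W hWnz
    refine le_of_nsmul_le_nsmul_right hSpos.ne' ?_
    calc h.rkC ((S : C)) • h.rkC ((T : C)) • h.deg ((W : C))
        = h.rkC ((T : C)) • h.rkC ((S : C)) • h.deg ((W : C)) := smul_comm _ _ _
      _ ≤ h.rkC ((T : C)) • h.rkC ((W : C)) • h.deg ((S : C)) := nsmul_le_nsmul_right h3 _
      _ = h.rkC ((W : C)) • h.rkC ((T : C)) • h.deg ((S : C)) := smul_comm _ _ _
      _ ≤ h.rkC ((W : C)) • h.rkC ((S : C)) • h.deg ((T : C)) := nsmul_le_nsmul_right h2 _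
      _ = h.rkC ((S : C)) • h.rkC ((W : C)) • h.deg ((T : C)) := smul_comm _ _ _
  exact absurd (hfin T hTmax) hSltT.not_ge

end Aux

end HNTheory

/-- (5.5) For a nonzero subobject `S` of `X` the following are equivalent:
(a) `S` is semistable and every subobject properly containing `S` has strictly
smaller slope; (b) `S` is of maximal slope and satisfies the same condition;
(c) `S` is the final subobject of `X` of maximal slope. -/
theorem stmt16 (h : HNTheory C D F V) {X : C} (S : Subobject X)
    (hS : ¬ IsZero ((S : C))) :
    ((h.Semistable (S : C) ∧ ∀ T : Subobject X, S < T → h.muLT (T : C) (S : C)) ↔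
     (h.MaxSlopeSub S ∧ ∀ T : Subobject X, S < T → h.muLT (T : C) (S : C))) ∧
    ((h.MaxSlopeSub S ∧ ∀ T : Subobject X, S < T → h.muLT (T : C) (S : C)) ↔
     (h.MaxSlopeSub S ∧ ∀ T : Subobject X, h.MaxSlopeSub T → T ≤ S)) := by
  constructor
  · constructor
    · rintro ⟨hsem, hcond⟩
      exact ⟨HNTheory.aux_max_of_semistable_cond h S hS hsem hcond, hcond⟩
    · rintro ⟨hmax, hcond⟩
      exact ⟨HNTheory.aux_semistable_of_max h S hS hmax, hcond⟩
  · constructor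
    · rintro ⟨hmax, hcond⟩
      exact ⟨hmax, HNTheory.aux_final_of_max_cond h S hS hmax hcond⟩
    · rintro ⟨hmax, hfin⟩
      exact ⟨hmax, HNTheory.aux_cond_of_max_final h S hS hmax hfin⟩
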